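/- Let θ ∈ T^n = (ℝ/ℤ)^n and suppose that the closed subgroup Γ = Γ(θ), the closure of the set of positive integer multiples of θ, is connected. Then for every x ∈ Γ, every neighborhood U of x in T^n, every integer m ≥ 1 and every residue a ∈ ℕ, there exist infinitely many k ∈ ℕ with k ≡ a (mod m) and kθ ∈ U. In other words, the multiples of θ along any arithmetic progression are dense in Γ. -/

import Mathlib

noncomputable section

/-- The `n`-dimensional torus `(ℝ/ℤ)^n`. -/
abbrev Torus (n : ℕ) := Fin n → AddCircle (1 : ℝ)

/-- `Γ(θ)`: the closure in `T^n` of the set of positive integer multiples of `θ`. -/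
def GammaCl (n : ℕ) (θ : Torus n) : Set (Torus n) :=
  closure {x : Torus n | ∃ k : ℕ, 1 ≤ k ∧ x = k • θ}

namespace GammaAux

variable {n : ℕ}

/-- The base set of positive multiples. -/
def S (n : ℕ) (θ : Torus n) : Set (Torus n) := {x : Torus n | ∃ k : ℕ, 1 ≤ k ∧ x = k • θ}

lemma gamma_eq_closure (θ : Torus n) : GammaCl n θ = closure (S n θ) := rfl

lemma smul_mem_gamma (θ : Torus n) {k : ℕ} (hk : 1 ≤ k) : k • θ ∈ GammaCl n θ :=
  subset_closure ⟨k, hk, rfl⟩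

/-- In any neighborhood of `0` there is some `j • θ` with `j ≥ 2`. -/
lemma exists_smul_mem_nhds_zero (θ : Torus n) {V : Set (Torus n)} (hV : V ∈ nhds (0 : Torus n)) :
    ∃ j : ℕ, 2 ≤ j ∧ j • θ ∈ V := by
  -- the sequence k ↦ (k+1) • θ has a cluster point in the compact torus
  obtain ⟨y, hy⟩ := exists_clusterPt_of_compactSpace
    (Filter.map (fun k : ℕ => (k + 1) • θ) Filter.atTop)
  have hy' : MapClusterPt y Filter.atTop (fun k : ℕ => (k + 1) • θ) := hy
  -- choose W a neighborhood of 0 with W - W ⊆ V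
  have hsub : Continuous fun p : Torus n × Torus n => p.1 - p.2 := continuous_sub
  have h0 : {p : Torus n × Torus n | p.1 - p.2 ∈ V} ∈ nhds ((0 : Torus n), (0 : Torus n)) := by
    have := hsub.continuousAt (x := ((0 : Torus n), (0 : Torus n)))
    exact this.preimage_mem_nhds (by simpa using hV)
  rw [mem_nhds_prod_iff] at h0
  obtain ⟨W₁, hW₁, W₂, hW₂, hW⟩ := h0
  -- the set of z with z - y ∈ W₁ ∩ W₂ is a neighborhood of y
  have hWy : {z : Torus n | z - y ∈ W₁ ∩ W₂} ∈ nhds y := by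
    have hc : ContinuousAt (fun z : Torus n => z - y) y := (continuous_id.sub continuous_const).continuousAt
    exact hc.preimage_mem_nhds (by simpa using Filter.inter_mem hW₁ hW₂)
  have hfreq := (mapClusterPt_iff_frequently.mp hy') _ hWy
  rw [Filter.frequently_atTop] at hfreq
  obtain ⟨k, -, hk⟩ := hfreq 0
  obtain ⟨l, hlk, hl⟩ := hfreq (k + 2)
  refine ⟨l - k, ?_, ?_⟩
  · omega
  · have hl' : (l + 1) • θ - y ∈ W₁ ∩ W₂ := hl
    have hk' : (k + 1) • θ - y ∈ W₁ ∩ W₂ := hk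
    have h2 := hW (Set.mk_mem_prod hl'.1 hk'.2)
    have h3 : ((l + 1) • θ - y) - ((k + 1) • θ - y) = (l - k) • θ := by
      rw [sub_sub_sub_cancel_right, sub_eq_add_neg, ← sub_nsmul θ (by omega : k + 1 ≤ l + 1)]
      congr 1
      omega
    rw [Set.mem_setOf_eq] at h2
    rwa [h3] at h2

lemma zero_mem_gamma (θ : Torus n) : (0 : Torus n) ∈ GammaCl n θ := by
  rw [gamma_eq_closure, mem_closure_iff_nhds]
  intro t ht
  obtain ⟨j, hj, hjt⟩ := exists_smul_mem_nhds_zero θ ht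
  exact ⟨j • θ, hjt, j, by omega, rfl⟩

lemma neg_base_mem_gamma (θ : Torus n) : -θ ∈ GammaCl n θ := by
  rw [gamma_eq_closure, mem_closure_iff_nhds]
  intro t ht
  have hc : ContinuousAt (fun z : Torus n => z - θ) 0 := (continuous_id.sub continuous_const).continuousAt
  have h0 : {z : Torus n | z - θ ∈ t} ∈ nhds (0 : Torus n) := by
    refine hc.preimage_mem_nhds ?_
    simpa using ht
  obtain ⟨j, hj, hjt⟩ := exists_smul_mem_nhds_zero θ h0
  refine ⟨(j - 1) • θ, ?_, j - 1, by omega, rfl⟩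
  have : (j - 1) • θ = j • θ - θ := by
    rw [sub_nsmul θ (by omega : 1 ≤ j), one_nsmul, ← sub_eq_add_neg]
  rw [this]
  exact hjt

lemma add_mem_gamma (θ : Torus n) {x y : Torus n}
    (hx : x ∈ GammaCl n θ) (hy : y ∈ GammaCl n θ) : x + y ∈ GammaCl n θ := by
  have hcl : IsClosed {p : Torus n × Torus n | p.1 + p.2 ∈ GammaCl n θ} :=
    isClosed_closure.preimage continuous_add
  have hsub : S n θ ×ˢ S n θ ⊆ {p : Torus n × Torus n | p.1 + p.2 ∈ GammaCl n θ} := by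
    rintro ⟨u, v⟩ ⟨⟨k, hk, rfl⟩, ⟨l, hl, rfl⟩⟩
    have : k • θ + l • θ = (k + l) • θ := (add_nsmul θ k l).symm
    simp only [Set.mem_setOf_eq, this]
    exact smul_mem_gamma θ (by omega)
  have h1 : closure (S n θ ×ˢ S n θ) ⊆ {p : Torus n × Torus n | p.1 + p.2 ∈ GammaCl n θ} :=
    closure_minimal hsub hcl
  have h2 : (x, y) ∈ closure (S n θ ×ˢ S n θ) := by
    rw [closure_prod_eq]
    exact ⟨hx, hy⟩
  exact h1 h2

lemma nsmul_mem_gamma (θ : Torus n) {x : Torus n} (hx : x ∈ GammaCl n θ) {k : ℕ} (hk : 1 ≤ k) :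
    k • x ∈ GammaCl n θ := by
  induction k with
  | zero => omega
  | succ k ih =>
    rcases Nat.eq_or_lt_of_le hk with h | h
    · simpa [← h] using hx
    · have hk1 : 1 ≤ k := by omega
      have : (k + 1) • x = k • x + x := succ_nsmul x k
      rw [this]
      exact add_mem_gamma θ (ih hk1) hx

lemma neg_mem_gamma (θ : Torus n) {x : Torus n} (hx : x ∈ GammaCl n θ) :
    -x ∈ GammaCl n θ := by
  have hcl : IsClosed {z : Torus n | -z ∈ GammaCl n θ} :=
    isClosed_closure.preimage continuous_neg
  have hsub : S n θ ⊆ {z : Torus n | -z ∈ GammaCl n θ} := by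
    rintro u ⟨k, hk, rfl⟩
    have : -(k • θ) = k • (-θ) := by rw [neg_nsmul]
    simp only [Set.mem_setOf_eq, this]
    exact nsmul_mem_gamma θ (neg_base_mem_gamma θ) hk
  exact closure_minimal hsub hcl hx

lemma sub_mem_gamma (θ : Torus n) {x y : Torus n}
    (hx : x ∈ GammaCl n θ) (hy : y ∈ GammaCl n θ) : x - y ∈ GammaCl n θ := by
  rw [sub_eq_add_neg]
  exact add_mem_gamma θ hx (neg_mem_gamma θ hy)

/-- `Γ(mθ) ⊆ Γ(θ)`. -/
lemma gammaM_subset (θ : Torus n) {m : ℕ} (hm : 1 ≤ m) :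
    GammaCl n (m • θ) ⊆ GammaCl n θ := by
  apply closure_minimal _ isClosed_closure
  rintro u ⟨j, hj, rfl⟩
  rw [smul_smul]
  exact smul_mem_gamma θ (by nlinarith)

/-- Key structure result: if `Γ(θ)` is connected then `Γ(θ) = Γ(mθ)` for `m ≥ 1`. -/
lemma gamma_eq_gammaM (θ : Torus n) (hconn : IsConnected (GammaCl n θ)) {m : ℕ} (hm : 1 ≤ m) :
    GammaCl n θ = GammaCl n (m • θ) := by
  classical
  set Γ := GammaCl n θ with hΓ
  set Γm := GammaCl n (m • θ) with hΓm
  have hΓmΓ : Γm ⊆ Γ := gammaM_subset θ hm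
  -- cosets
  set coset : ℕ → Set (Torus n) := fun a => {z : Torus n | z - a • θ ∈ Γm} with hcoset
  have hcoset_closed : ∀ a, IsClosed (coset a) := fun a =>
    isClosed_closure.preimage (continuous_id.sub continuous_const)
  -- every element of Γ lies in some coset with a < m
  have hcover : ∀ z ∈ Γ, ∃ a < m, z ∈ coset a := by
    intro z hz
    -- S θ ⊆ ⋃ a < m, coset a, which is closed
    have hclosed : IsClosed (⋃ a ∈ Finset.range m, coset a) :=
      isClosed_biUnion_finset fun a _ => hcoset_closed a
    have hsubS : S n θ ⊆ ⋃ a ∈ Finset.range m, coset a := by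
      rintro u ⟨k, hk, rfl⟩
      refine Set.mem_biUnion (Finset.mem_range.mpr (Nat.mod_lt k hm)) ?_
      show k • θ - (k % m) • θ ∈ Γm
      have hle : k % m ≤ k := Nat.mod_le k m
      have h1 : k • θ - (k % m) • θ = (k - k % m) • θ := by
        rw [sub_eq_add_neg, ← sub_nsmul θ hle]
      have h2 : k - k % m = (k / m) * m := by
        have := Nat.div_add_mod' k m
        omega
      rw [h1, h2]
      rcases Nat.eq_zero_or_pos (k / m) with h | h
      · simp only [h, zero_mul, zero_smul]
        exact zero_mem_gamma (m • θ)
      · rw [← smul_smul]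
        exact smul_mem_gamma (m • θ) h
    have := closure_minimal hsubS hclosed hz
    simpa using this
  -- good cosets coincide with Γm; bad cosets are disjoint from Γm
  have hgood : ∀ a : ℕ, a • θ ∈ Γm → coset a = Γm := by
    intro a ha
    ext z
    constructor
    · intro hz
      have : z - a • θ + a • θ ∈ Γm := add_mem_gamma (m • θ) hz ha
      simpa using this
    · intro hz
      exact sub_mem_gamma (m • θ) hz ha
  have hbad : ∀ a : ℕ, a • θ ∉ Γm → ∀ z ∈ Γm, z ∉ coset a := by
    intro a ha z hz hza
    exact ha (by simpa using sub_mem_gamma (m • θ) hz hza)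
  -- the connectedness argument
  have key : Γ ⊆ Γm := by
    by_contra hnot
    rw [Set.not_subset] at hnot
    obtain ⟨w, hwΓ, hwm⟩ := hnot
    -- separation: U = complement of bad cosets, V = complement of Γm
    set Bad := (Finset.range m).filter (fun a => a • θ ∉ Γm) with hBad
    set B : Set (Torus n) := ⋃ a ∈ Bad, coset a with hB
    have hBclosed : IsClosed B := isClosed_biUnion_finset fun a _ => hcoset_closed a
    have hUV : Γ ⊆ Bᶜ ∪ Γmᶜ := by
      intro z hz
      by_cases h : z ∈ Γm
      · left
        intro hzB
        simp only [hB, Set.mem_iUnion] at hzB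
        obtain ⟨a, haBad, hza⟩ := hzB
        have := Finset.mem_filter.mp haBad
        exact hbad a this.2 z h hza
      · right; exact h
    have hmθΓm : m • θ ∈ Γm := by
      have := smul_mem_gamma (m • θ) (le_refl 1)
      simpa using this
    have hU : (Γ ∩ Bᶜ).Nonempty := by
      refine ⟨m • θ, hΓmΓ hmθΓm, ?_⟩
      intro hzB
      simp only [hB, Set.mem_iUnion] at hzB
      obtain ⟨a, haBad, hza⟩ := hzB
      have := Finset.mem_filter.mp haBad
      exact hbad a this.2 _ hmθΓm hza
    have hV : (Γ ∩ Γmᶜ).Nonempty := ⟨w, hwΓ, hwm⟩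
    obtain ⟨z, hzΓ, hzU, hzV⟩ := hconn.isPreconnected _ _ hBclosed.isOpen_compl
      isClosed_closure.isOpen_compl hUV hU hV
    obtain ⟨a, ham, hza⟩ := hcover z hzΓ
    by_cases h : a • θ ∈ Γm
    · exact hzV (by rw [hgood a h] at hza; exact hza)
    · refine hzU ?_
      simp only [hB, Set.mem_iUnion]
      exact ⟨a, Finset.mem_filter.mpr ⟨Finset.mem_range.mpr ham, h⟩, hza⟩
  exact le_antisymm key hΓmΓ

end GammaAux



/-- If `Γ(θ)` is connected, then for every `x ∈ Γ(θ)`, every neighborhood `U` of `x`,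
every `m ≥ 1` and every residue `a`, there are infinitely many `k ∈ ℕ` with
`k ≡ a (mod m)` and `kθ ∈ U`: the multiples of `θ` along any arithmetic progression
are dense in `Γ(θ)`. -/
theorem multiples_along_arith_progression_dense (n : ℕ) (θ : Torus n)
    (hconn : IsConnected (GammaCl n θ)) :
    ∀ x ∈ GammaCl n θ, ∀ U ∈ nhds x, ∀ m : ℕ, 1 ≤ m → ∀ a : ℕ,
      {k : ℕ | k ≡ a [MOD m] ∧ k • θ ∈ U}.Infinite := by
  classical
  intro x hx U hU m hm a
  set a' := a % m with ha'def
  have ha'm : a' < m := Nat.mod_lt a hm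
  have hΓeq : GammaCl n θ = GammaCl n (m • θ) := GammaAux.gamma_eq_gammaM θ hconn hm
  have hxm : x ∈ GammaCl n (m • θ) := hΓeq ▸ hx
  have ha'θ : a' • θ ∈ GammaCl n (m • θ) := by
    rcases Nat.eq_zero_or_pos a' with h | h
    · rw [h, zero_smul]
      exact GammaAux.zero_mem_gamma (m • θ)
    · exact hΓeq ▸ GammaAux.smul_mem_gamma θ h
  have hy : x - a' • θ ∈ GammaCl n (m • θ) := GammaAux.sub_mem_gamma (m • θ) hxm ha'θ
  by_contra hinf
  have hfin : {k : ℕ | k ≡ a [MOD m] ∧ k • θ ∈ U}.Finite := Set.not_infinite.mp hinf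
  obtain ⟨N, hN⟩ := hfin.bddAbove
  set N' := N + 1 with hN'def
  have hN'θ : N' • (m • θ) ∈ GammaCl n (m • θ) :=
    GammaAux.smul_mem_gamma (m • θ) (by omega)
  have hz : (x - a' • θ) - N' • (m • θ) ∈ GammaCl n (m • θ) :=
    GammaAux.sub_mem_gamma (m • θ) hy hN'θ
  have hnbhd : {w : Torus n | a' • θ + (N' • (m • θ) + w) ∈ U} ∈
      nhds ((x - a' • θ) - N' • (m • θ)) := by
    have hc : Continuous fun w : Torus n => a' • θ + (N' • (m • θ) + w) :=
      continuous_const.add (continuous_const.add continuous_id)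
    refine hc.continuousAt.preimage_mem_nhds ?_
    have : a' • θ + (N' • (m • θ) + ((x - a' • θ) - N' • (m • θ))) = x := by abel
    rw [this]
    exact hU
  rw [GammaAux.gamma_eq_closure, mem_closure_iff_nhds] at hz
  obtain ⟨u, hu1, j₀, hj₀, rfl⟩ := hz _ hnbhd
  set k := a' + (N' + j₀) * m with hkdef
  have hkθ : k • θ = a' • θ + (N' • (m • θ) + j₀ • (m • θ)) := by
    rw [hkdef, add_nsmul, ← smul_smul, add_smul]
  have hkmem : k ∈ {k : ℕ | k ≡ a [MOD m] ∧ k • θ ∈ U} := by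
    constructor
    · show k % m = a % m
      rw [hkdef, Nat.add_mul_mod_self_right, ha'def]
      exact Nat.mod_mod_of_dvd a dvd_rfl
    · rw [hkθ]
      exact hu1
  have hk_le : k ≤ N := hN hkmem
  have : N' ≤ k := by
    have h1 : N' + j₀ ≤ (N' + j₀) * m := Nat.le_mul_of_pos_right _ hm
    omega
  omega
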